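/- Let F be a field and θ an algebraic element of degree h over F. Then the set θ + F = {θ + a : a ∈ F} is a B_h set in the multiplicative group of nonzero elements of F(θ). -/

import Mathlib

open IntermediateField Polynomial

/-- Multiplicative `B_h[g]` property. -/
def IsMulBhg {G : Type*} [CommMonoid G] (A : Set G) (h g : ℕ) : Prop :=
  ∀ b : G, ∀ s : Finset (Multiset G),
    (∀ m ∈ s, Multiset.card m = h ∧ (∀ x ∈ m, x ∈ A) ∧ m.prod = b) → s.card ≤ g

lemma exists_multiset_map_of_forall {α β : Type*} (f : α → β) (m : Multiset β)
    (hm : ∀ x ∈ m, ∃ a, x = f a) : ∃ t : Multiset α, m = t.map f := by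
  induction m using Multiset.induction with
  | empty => exact ⟨0, rfl⟩
  | cons x m ih =>
    obtain ⟨t, ht⟩ := ih (fun y hy => hm y (Multiset.mem_cons_of_mem hy))
    obtain ⟨a, ha⟩ := hm x (Multiset.mem_cons_self x m)
    exact ⟨a ::ₘ t, by simp [ht, ha]⟩

theorem stmt_4 {F E : Type*} [Field F] [Field E] [Algebra F E] (θ : E)
    (h : ℕ) (hh : 2 ≤ h) (hθ : IsIntegral F θ) (hdeg : (minpoly F θ).natDegree = h) :
    (∀ x ∈ {x : F⟮θ⟯ | ∃ a : F, x = AdjoinSimple.gen F θ + algebraMap F F⟮θ⟯ a},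
      x ≠ 0) ∧
    IsMulBhg {x : F⟮θ⟯ | ∃ a : F, x = AdjoinSimple.gen F θ + algebraMap F F⟮θ⟯ a} h 1 := by
  set θ' := AdjoinSimple.gen F θ with hθ'def
  have hmap : algebraMap F⟮θ⟯ E θ' = θ := AdjoinSimple.algebraMap_gen F θ
  have hint' : IsIntegral F θ' := by
    have h1 : IsIntegral F (algebraMap F⟮θ⟯ E θ') := by rw [hmap]; exact hθ
    exact (isIntegral_algebraMap_iff (algebraMap F⟮θ⟯ E).injective).mp h1
  have hmin : minpoly F θ' = minpoly F θ := by
    have := minpoly.algebraMap_eq (A := F) (algebraMap F⟮θ⟯ E).injective θ'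
    rw [hmap] at this; exact this.symm
  have hdeg' : (minpoly F θ').natDegree = h := by rw [hmin, hdeg]
  -- helper : polynomial associated to a multiset of F
  have key : ∀ t : Multiset F,
      (Polynomial.aeval θ' ((t.map (fun a => X + C a)).prod))
        = (t.map (fun a => θ' + algebraMap F F⟮θ⟯ a)).prod := by
    intro t
    rw [map_multiset_prod, Multiset.map_map]
    congr 1
    apply Multiset.map_congr rfl
    intro a _
    simp [Polynomial.aeval_add, Algebra.algebraMap_eq_smul_one]
  constructor
  · rintro x ⟨a, rfl⟩ hx0
    have : θ' = algebraMap F F⟮θ⟯ (-a) := by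
      rw [map_neg]; linear_combination hx0
    have h1 : (minpoly F θ').natDegree = 1 := by
      rw [this, minpoly.eq_X_sub_C F⟮θ⟯ (-a)]
      exact natDegree_X_sub_C _
    omega
  · intro b s hs
    rw [Finset.card_le_one]
    intro m1 hm1 m2 hm2
    obtain ⟨hc1, ha1, hp1⟩ := hs m1 hm1
    obtain ⟨hc2, ha2, hp2⟩ := hs m2 hm2
    obtain ⟨t1, ht1⟩ := exists_multiset_map_of_forall _ m1 ha1
    obtain ⟨t2, ht2⟩ := exists_multiset_map_of_forall _ m2 ha2
    have hct1 : Multiset.card t1 = h := by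
      rw [ht1, Multiset.card_map] at hc1; exact hc1
    have hct2 : Multiset.card t2 = h := by
      rw [ht2, Multiset.card_map] at hc2; exact hc2
    set p1 : F[X] := (t1.map (fun a => X + C a)).prod with hp1def
    set p2 : F[X] := (t2.map (fun a => X + C a)).prod with hp2def
    have hmon1 : p1.Monic := monic_multiset_prod_of_monic _ _ (fun a _ => monic_X_add_C a)
    have hmon2 : p2.Monic := monic_multiset_prod_of_monic _ _ (fun a _ => monic_X_add_C a)
    have hnd1 : p1.natDegree = h := by
      rw [hp1def, natDegree_multiset_prod_of_monic _ (fun f hf => by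
        obtain ⟨a, _, rfl⟩ := Multiset.mem_map.mp hf; exact monic_X_add_C a)]
      simp [Multiset.map_map, hct1]
    have hnd2 : p2.natDegree = h := by
      rw [hp2def, natDegree_multiset_prod_of_monic _ (fun f hf => by
        obtain ⟨a, _, rfl⟩ := Multiset.mem_map.mp hf; exact monic_X_add_C a)]
      simp [Multiset.map_map, hct2]
    have heval : Polynomial.aeval θ' (p1 - p2) = 0 := by
      rw [map_sub, hp1def, hp2def, key, key, ← ht1, ← ht2, hp1, hp2, sub_self]
    have hpp : p1 = p2 := by
      by_contra hne
      have hsub : p1 - p2 ≠ 0 := sub_ne_zero.mpr hne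
      have hlt : (p1 - p2).degree < p1.degree := by
        apply degree_sub_lt
        · rw [(degree_eq_natDegree hmon1.ne_zero), (degree_eq_natDegree hmon2.ne_zero), hnd1, hnd2]
        · exact hmon1.ne_zero
        · rw [hmon1.leadingCoeff, hmon2.leadingCoeff]
      have hle := minpoly.degree_le_of_ne_zero F θ' hsub heval
      rw [(degree_eq_natDegree hmon1.ne_zero), hnd1] at hlt
      have : (minpoly F θ').degree = (h : ℕ∞) := by
        rw [(degree_eq_natDegree (minpoly.monic hint').ne_zero), hdeg']
        rfl
      rw [this] at hle
      exact absurd (lt_of_le_of_lt hle hlt) (lt_irrefl _)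
    have hroots : ∀ t : Multiset F,
        ((t.map (fun a => X + C a)).prod).roots = t.map (fun a => -a) := by
      intro t
      rw [roots_multiset_prod _ (by
        intro h0
        obtain ⟨a, _, ha⟩ := Multiset.mem_map.mp h0
        exact (monic_X_add_C a).ne_zero ha)]
      rw [Multiset.bind_map]
      have heach : ∀ a ∈ t, (X + C a).roots = ({-a} : Multiset F) := by
        intro a _
        rw [show X + C a = X - C (-a) by rw [map_neg, sub_neg_eq_add], roots_X_sub_C]
      rw [Multiset.bind_congr heach, Multiset.bind_singleton]
    have ht : t1 = t2 := by
      have := congrArg Polynomial.roots hpp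
      rw [hp1def, hp2def, hroots, hroots] at this
      exact Multiset.map_injective neg_injective this
    rw [ht1, ht2, ht]
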